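/- (Proposition B.3.) Let γ : ℝ^{Nd}_+ → ℝ be weakly DR-submodular, with vectors in ℝ^{Nd}_+ viewed in N blocks of dimension d. Then for all s = (s_1, …, s_N) and s' = (s'_1, …, s'_N) in ℝ^{Nd}_+, ∑_{i=1}^N [γ(s_i + s'_i, s_{-i}) − γ(s)] ≥ γ(s + s') − γ(s); that is, γ has generalized submodularity ratio 1. -/

import Mathlib

/-- A function `f` on a subset `X ⊆ ℝ^ι` is weakly DR-submodular if for all `x ≤ y` in `X`,
every coordinate `i` with `x i = y i`, and every `k ≥ 0` keeping both points in `X`,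
`f (x + k eᵢ) − f x ≥ f (y + k eᵢ) − f y`. -/
def WeaklyDRSubmodularOn {ι : Type*} [DecidableEq ι] (X : Set (ι → ℝ))
    (f : (ι → ℝ) → ℝ) : Prop :=
  ∀ ⦃x y : ι → ℝ⦄, x ∈ X → y ∈ X → x ≤ y →
    ∀ i : ι, x i = y i → ∀ k : ℝ, 0 ≤ k →
      x + Pi.single i k ∈ X → y + Pi.single i k ∈ X →
        f (x + Pi.single i k) - f x ≥ f (y + Pi.single i k) - f y

/-- Replace player `i`'s block of the joint strategy `s` by `v`, i.e. the outcome
`(v, s₋ᵢ)`. -/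
def upd {N d : ℕ} (s : Fin N × Fin d → ℝ) (i : Fin N) (v : Fin d → ℝ) :
    Fin N × Fin d → ℝ :=
  fun q => if q.1 = i then v q.2 else s q

/-- Injectivity of the index map `(i, r) ↦ r + d * i`. -/
lemma aux_idx_inj {N d : ℕ} (i i' : Fin N) (r r' : Fin d)
    (h : (r' : ℕ) + d * (i' : ℕ) = (r : ℕ) + d * (i : ℕ)) : r' = r ∧ i' = i := by
  have hd : 0 < d := r.pos
  have h1 : ((r' : ℕ) + d * (i' : ℕ)) % d = ((r : ℕ) + d * (i : ℕ)) % d := by rw [h]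
  rw [Nat.add_mul_mod_self_left, Nat.add_mul_mod_self_left,
    Nat.mod_eq_of_lt r'.isLt, Nat.mod_eq_of_lt r.isLt] at h1
  have h2 : d * (i' : ℕ) = d * (i : ℕ) := by omega
  exact ⟨Fin.ext h1, Fin.ext (Nat.eq_of_mul_eq_mul_left hd h2)⟩

/-- Splitting a sum over `range (d * N)` into blocks. -/
lemma aux_sum_range_mul (g : ℕ → ℝ) (d : ℕ) :
    ∀ N : ℕ, ∑ j ∈ Finset.range (d * N), g j
      = ∑ i ∈ Finset.range N, ∑ r ∈ Finset.range d, g (r + d * i) := by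
  intro N
  induction N with
  | zero => simp
  | succ n ih =>
    rw [Finset.sum_range_succ, ← ih, Nat.mul_succ, Finset.range_eq_Ico,
      ← Finset.sum_Ico_consecutive g (Nat.zero_le (d * n)) (Nat.le_add_right (d * n) d),
      ← Finset.range_eq_Ico]
    congr 1
    rw [Finset.sum_Ico_eq_sum_range]
    have hdd : d * n + d - d * n = d := by omega
    rw [hdd]
    exact Finset.sum_congr rfl fun r _ => by rw [Nat.add_comm (d * n) r]

/-- Proposition B.3: if the social function `γ : ℝ^{Nd}_+ → ℝ` is weakly DR-submodular, then
it has generalized submodularity ratio `1`: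
`∑ᵢ (γ(sᵢ + s'ᵢ, s₋ᵢ) − γ(s)) ≥ γ(s + s') − γ(s)` for all `s, s' ≥ 0`. -/
theorem weaklyDR_implies_generalized_ratio_one {N d : ℕ}
    (γ : (Fin N × Fin d → ℝ) → ℝ)
    (hweak : WeaklyDRSubmodularOn {x : Fin N × Fin d → ℝ | 0 ≤ x} γ) :
    ∀ s s' : Fin N × Fin d → ℝ, 0 ≤ s → 0 ≤ s' →
      ∑ i : Fin N, (γ (upd s i (fun r => s (i, r) + s' (i, r))) - γ s) ≥
        γ (s + s') - γ s := by
  intro s s' hs hs'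
  classical
  -- global partial sums along the lexicographic enumeration
  set A : ℕ → (Fin N × Fin d → ℝ) :=
    fun j q => s q + if (q.2 : ℕ) + d * (q.1 : ℕ) < j then s' q else 0 with hA
  -- block-local partial sums
  set B : Fin N → ℕ → (Fin N × Fin d → ℝ) :=
    fun i m q => s q + if q.1 = i ∧ (q.2 : ℕ) < m then s' q else 0 with hB
  have hAmem : ∀ j, A j ∈ {x : Fin N × Fin d → ℝ | 0 ≤ x} := by
    intro j
    simp only [Set.mem_setOf_eq, Pi.le_def]
    intro q
    simp only [hA, Pi.zero_apply]
    split_ifs with h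
    · exact add_nonneg (hs q) (hs' q)
    · simpa using hs q
  have hBmem : ∀ i m, B i m ∈ {x : Fin N × Fin d → ℝ | 0 ≤ x} := by
    intro i m
    simp only [Set.mem_setOf_eq, Pi.le_def]
    intro q
    simp only [hB, Pi.zero_apply]
    split_ifs with h
    · exact add_nonneg (hs q) (hs' q)
    · simpa using hs q
  -- successor identities
  have hBsucc : ∀ (i : Fin N) (r : Fin d),
      B i ((r : ℕ) + 1) = B i (r : ℕ) + Pi.single (i, r) (s' (i, r)) := by
    intro i r
    funext q
    simp only [hB, Pi.add_apply]
    rcases eq_or_ne q (i, r) with hq | hq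
    · subst hq
      simp [Pi.single_eq_same]
    · rw [Pi.single_eq_of_ne hq, add_zero]
      congr 1
      have hiff : (q.1 = i ∧ (q.2 : ℕ) < (r : ℕ) + 1) ↔ (q.1 = i ∧ (q.2 : ℕ) < (r : ℕ)) := by
        constructor
        · rintro ⟨h1, h2⟩
          refine ⟨h1, ?_⟩
          rcases Nat.lt_succ_iff_lt_or_eq.mp h2 with h | h
          · exact h
          · exact absurd (Prod.ext h1 (Fin.ext h)) hq
        · rintro ⟨h1, h2⟩
          exact ⟨h1, h2.trans (Nat.lt_succ_self _)⟩
      simp only [hiff]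
  have hAsucc : ∀ (i : Fin N) (r : Fin d),
      A ((r : ℕ) + d * (i : ℕ) + 1) = A ((r : ℕ) + d * (i : ℕ)) + Pi.single (i, r) (s' (i, r)) := by
    intro i r
    funext q
    simp only [hA, Pi.add_apply]
    rcases eq_or_ne q (i, r) with hq | hq
    · subst hq
      simp [Pi.single_eq_same]
    · rw [Pi.single_eq_of_ne hq, add_zero]
      congr 1
      have hiff : ((q.2 : ℕ) + d * (q.1 : ℕ) < (r : ℕ) + d * (i : ℕ) + 1) ↔
          ((q.2 : ℕ) + d * (q.1 : ℕ) < (r : ℕ) + d * (i : ℕ)) := by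
        constructor
        · intro h2
          rcases Nat.lt_succ_iff_lt_or_eq.mp h2 with h | h
          · exact h
          · obtain ⟨h3, h4⟩ := aux_idx_inj i q.1 r q.2 h
            exact absurd (Prod.ext h4 h3) hq
        · intro h2
          exact h2.trans (Nat.lt_succ_self _)
      simp only [hiff]
  -- the key per-coordinate inequality, from weak DR-submodularity
  have key : ∀ (i : Fin N) (r : Fin d),
      γ (B i ((r : ℕ) + 1)) - γ (B i (r : ℕ)) ≥
        γ (A ((r : ℕ) + d * (i : ℕ) + 1)) - γ (A ((r : ℕ) + d * (i : ℕ))) := by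
    intro i r
    have hle : B i (r : ℕ) ≤ A ((r : ℕ) + d * (i : ℕ)) := by
      intro q
      simp only [hA, hB]
      have himp : (q.1 = i ∧ (q.2 : ℕ) < (r : ℕ)) →
          ((q.2 : ℕ) + d * (q.1 : ℕ) < (r : ℕ) + d * (i : ℕ)) := by
        rintro ⟨h1, h2⟩
        rw [h1]
        omega
      split_ifs with h1 h2 h2
      · exact le_refl _
      · exact absurd (himp h1) h2
      · exact add_le_add (le_refl _) (hs' q)
      · exact le_refl _
    have heq : B i (r : ℕ) (i, r) = A ((r : ℕ) + d * (i : ℕ)) (i, r) := by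
      simp [hA, hB]
    have h1 := hweak (hBmem i (r : ℕ)) (hAmem ((r : ℕ) + d * (i : ℕ))) hle (i, r) heq
      (s' (i, r)) (hs' (i, r)) (by rw [← hBsucc]; exact hBmem i ((r : ℕ) + 1))
      (by rw [← hAsucc]; exact hAmem ((r : ℕ) + d * (i : ℕ) + 1))
    rw [← hBsucc, ← hAsucc] at h1
    exact h1
  -- endpoint identities
  have hB0 : ∀ i, B i 0 = s := by
    intro i
    funext q
    simp [hB]
  have hBd : ∀ i : Fin N, upd s i (fun r => s (i, r) + s' (i, r)) = B i d := by
    intro i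
    funext q
    obtain ⟨q1, q2⟩ := q
    by_cases h : q1 = i
    · subst h
      simp [upd, hB, q2.isLt]
    · simp [upd, hB, h]
  have hA0 : A 0 = s := by
    funext q
    simp [hA]
  have hANd : A (d * N) = s + s' := by
    funext q
    obtain ⟨q1, q2⟩ := q
    have h1 : d * ((q1 : ℕ) + 1) ≤ d * N := Nat.mul_le_mul_left d q1.isLt
    have h2 : (q2 : ℕ) + d * (q1 : ℕ) < d * N := by
      have h3 : d * ((q1 : ℕ) + 1) = d * (q1 : ℕ) + d := by ring
      have h4 := q2.isLt
      omega
    simp [hA, h2]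
  -- put everything together
  calc ∑ i : Fin N, (γ (upd s i (fun r => s (i, r) + s' (i, r))) - γ s)
      = ∑ i : Fin N, ∑ r : Fin d, (γ (B i ((r : ℕ) + 1)) - γ (B i (r : ℕ))) := by
        refine Finset.sum_congr rfl fun i _ => ?_
        rw [Fin.sum_univ_eq_sum_range (fun m => γ (B i (m + 1)) - γ (B i m)) d,
          Finset.sum_range_sub (fun m => γ (B i m)) d, hB0, hBd]
    _ ≥ ∑ i : Fin N, ∑ r : Fin d, (γ (A ((r : ℕ) + d * (i : ℕ) + 1)) -
          γ (A ((r : ℕ) + d * (i : ℕ)))) := by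
        refine Finset.sum_le_sum fun i _ => Finset.sum_le_sum fun r _ => key i r
    _ = γ (s + s') - γ s := by
        rw [Fin.sum_univ_eq_sum_range
          (fun m => ∑ r : Fin d, (γ (A ((r : ℕ) + d * m + 1)) - γ (A ((r : ℕ) + d * m)))) N]
        have hinner : ∀ m : ℕ,
            ∑ r : Fin d, (γ (A ((r : ℕ) + d * m + 1)) - γ (A ((r : ℕ) + d * m)))
              = ∑ r ∈ Finset.range d, (γ (A (r + d * m + 1)) - γ (A (r + d * m))) :=
          fun m => Fin.sum_univ_eq_sum_range (fun r => γ (A (r + d * m + 1)) - γ (A (r + d * m))) d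
        simp only [hinner]
        rw [← aux_sum_range_mul (fun j => γ (A (j + 1)) - γ (A j)) d N,
          Finset.sum_range_sub (fun j => γ (A j)) (d * N), hA0, hANd]
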